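/- arXiv:2311.01216 — 2 statements merged into one kernel-verified Lean document; each statement's English description precedes it below -/
import Mathlib

section
/- Key one-step inequality for the relaxed proximal gradient algorithm αPGD: let f : ℝⁿ → ℝ be convex and differentiable with ∇f L_f-Lipschitz, let φ : ℝⁿ → ℝ be M-weakly convex (M ∈ ℝ), let α ∈ (0,1), τ > 0, and set F = f + φ. Given x_k, y_k ∈ ℝⁿ, define q_{k+1} = (1−α)y_k + α·x_k, let x_{k+1} minimize u ↦ φ(u) + (1/(2τ))‖u − (x_k − τ·∇f(q_{k+1}))‖² over ℝⁿ, and set y_{k+1} = (1−α)y_k + α·x_{k+1}. Then for every y ∈ ℝⁿ: (1/α − 1)(F(y_k) − F(y)) + (1/(2τ))‖y − x_k‖² ≥ (1/α)(F(y_{k+1}) − F(y)) + (1/(2τ) − α·L_f/2)‖x_{k+1} − x_k‖² + (1/(2τ) − M/2)‖x_{k+1} − y‖² − (M/2)(1−α)‖y_k − x_{k+1}‖². -/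
open RealInnerProductSpace

variable {E : Type*} [NormedAddCommGroup E] [InnerProductSpace ℝ E]

/-- combination identity for squared norms -/
lemma comb_norm_sq (a b : E) (t : ℝ) :
    ‖(1 - t) • a + t • b‖ ^ 2 =
      (1 - t) * ‖a‖ ^ 2 + t * ‖b‖ ^ 2 - t * (1 - t) * ‖a - b‖ ^ 2 := by
  have h : ∀ x : E, ‖x‖ ^ 2 = ⟪x, x⟫ := fun x => (real_inner_self_eq_norm_sq x).symm
  rw [h, h, h, h]
  simp only [inner_add_left, inner_add_right, inner_sub_left, inner_sub_right,
    real_inner_smul_left, real_inner_smul_right]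
  rw [real_inner_comm b a]
  ring

/-- gradient inequality for convex functions -/
lemma grad_ineq [CompleteSpace E] {f : E → ℝ} {f' : E → E}
    (hf : ∀ x, HasGradientAt f (f' x) x) (hconv : ConvexOn ℝ Set.univ f) (q w : E) :
    ⟪f' q, w - q⟫ ≤ f w - f q := by
  set v := w - q with hv
  have hline : HasDerivAt (fun s : ℝ => f (q + s • v)) ⟪f' (q + (0:ℝ) • v), v⟫ 0 := by
    have h1 : HasDerivAt (fun s : ℝ => q + s • v) v (0:ℝ) := by
      simpa using ((hasDerivAt_id (0:ℝ)).smul_const v).const_add q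
    have h2 := (hf (q + (0:ℝ) • v)).hasFDerivAt.comp_hasDerivAt 0 h1
    simpa [InnerProductSpace.toDual_apply_apply, Function.comp_def] using h2
  have hc : ConvexOn ℝ Set.univ fun s : ℝ => f (q + s • v) := by
    have h3 := hconv.comp_affineMap (AffineMap.lineMap q w : ℝ →ᵃ[ℝ] E)
    have h4 : (fun s : ℝ => f (q + s • v)) = f ∘ (AffineMap.lineMap q w : ℝ →ᵃ[ℝ] E) := by
      funext s
      simp [AffineMap.lineMap_apply, hv, add_comm]
    rw [h4]
    simpa using h3
  have h5 := hc.le_slope_of_hasDerivAt (Set.mem_univ (0:ℝ)) (Set.mem_univ (1:ℝ)) one_pos hline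
  simp only [slope, zero_smul, add_zero, one_smul] at h5
  simpa [sub_zero, hv] using h5

/-- descent lemma -/
lemma descent_lemma [CompleteSpace E] {f : E → ℝ} {f' : E → E} {L : ℝ}
    (hf : ∀ x, HasGradientAt f (f' x) x) (hlip : ∀ u v, ‖f' u - f' v‖ ≤ L * ‖u - v‖)
    (q w : E) : f w ≤ f q + ⟪f' q, w - q⟫ + L / 2 * ‖w - q‖ ^ 2 := by
  set v := w - q with hv
  have hline : ∀ t : ℝ, HasDerivAt (fun s : ℝ => f (q + s • v)) ⟪f' (q + t • v), v⟫ t := by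
    intro t
    have h1 : HasDerivAt (fun s : ℝ => q + s • v) v t := by
      simpa using ((hasDerivAt_id t).smul_const v).const_add q
    have h2 := (hf (q + t • v)).hasFDerivAt.comp_hasDerivAt t h1
    simpa [InnerProductSpace.toDual_apply_apply, Function.comp_def] using h2
  have hc' : Continuous f' := by
    have hL : LipschitzWith (Real.toNNReal L) f' := by
      apply LipschitzWith.of_dist_le_mul
      intro a b
      rw [dist_eq_norm, dist_eq_norm]
      calc ‖f' a - f' b‖ ≤ L * ‖a - b‖ := hlip a b
        _ ≤ (Real.toNNReal L : ℝ) * ‖a - b‖ := by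
            apply mul_le_mul_of_nonneg_right _ (norm_nonneg _)
            rw [Real.coe_toNNReal']; exact le_max_left L 0
    exact hL.continuous
  have hcont : Continuous fun t : ℝ => ⟪f' (q + t • v), v⟫ := by
    apply Continuous.inner _ continuous_const
    exact hc'.comp (continuous_const.add (continuous_id.smul continuous_const))
  have hFTC : f (q + (1:ℝ) • v) - f (q + (0:ℝ) • v) = ∫ t in (0:ℝ)..1, ⟪f' (q + t • v), v⟫ :=
    (intervalIntegral.integral_eq_sub_of_hasDerivAt (fun t _ => hline t)
      (hcont.intervalIntegrable 0 1)).symm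
  have hb : ∫ t in (0:ℝ)..1, ⟪f' (q + t • v), v⟫ ≤
      ∫ t in (0:ℝ)..1, (⟪f' q, v⟫ + L * ‖v‖ ^ 2 * t) := by
    apply intervalIntegral.integral_mono_on (by norm_num) (hcont.intervalIntegrable 0 1)
      (Continuous.intervalIntegrable (by continuity) 0 1)
    intro t ht
    have h3 : ⟪f' (q + t • v) - f' q, v⟫ ≤ ‖f' (q + t • v) - f' q‖ * ‖v‖ :=
      real_inner_le_norm _ _
    have h4 : ‖f' (q + t • v) - f' q‖ ≤ L * (t * ‖v‖) := by
      have h := hlip (q + t • v) q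
      simpa [norm_smul, abs_of_nonneg ht.1] using h
    have h5 : ⟪f' (q + t • v), v⟫ = ⟪f' q, v⟫ + ⟪f' (q + t • v) - f' q, v⟫ := by
      rw [inner_sub_left]; ring
    have h6 := mul_le_mul_of_nonneg_right h4 (norm_nonneg v)
    have h7 : L * (t * ‖v‖) * ‖v‖ = L * ‖v‖ ^ 2 * t := by ring
    rw [h5]
    linarith
  have hint : ∫ t in (0:ℝ)..1, (⟪f' q, v⟫ + L * ‖v‖ ^ 2 * t) = ⟪f' q, v⟫ + L / 2 * ‖v‖ ^ 2 := by
    rw [intervalIntegral.integral_add (intervalIntegrable_const)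
      (Continuous.intervalIntegrable (by continuity) 0 1),
      intervalIntegral.integral_const, intervalIntegral.integral_const_mul, integral_id]
    norm_num; ring
  have h0 : q + (0:ℝ) • v = q := by simp
  have h1' : q + (1:ℝ) • v = w := by simp [hv]
  rw [h0, h1'] at hFTC
  rw [hint] at hb
  linarith
set_option maxHeartbeats 2000000 in
/-- Key one-step inequality for αPGD: with `f` convex, differentiable,
`∇f` `L_f`-Lipschitz, `φ` `M`-weakly convex, `α ∈ (0,1)`, `τ > 0`, `F = f + φ`, and one
αPGD step `q_{k+1} = (1−α)y_k + αx_k`, `x_{k+1} ∈ Prox_{τφ}(x_k − τ∇f(q_{k+1}))`,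
`y_{k+1} = (1−α)y_k + αx_{k+1}`, one has for every `y`:
`(1/α − 1)(F(y_k) − F(y)) + (1/(2τ))‖y − x_k‖² ≥ (1/α)(F(y_{k+1}) − F(y))
 + (1/(2τ) − αL_f/2)‖x_{k+1} − x_k‖² + (1/(2τ) − M/2)‖x_{k+1} − y‖²
 − (M/2)(1−α)‖y_k − x_{k+1}‖²`. -/
theorem alphaPGD_one_step_inequality {n : ℕ}
    (f : EuclideanSpace ℝ (Fin n) → ℝ)
    (f' : EuclideanSpace ℝ (Fin n) → EuclideanSpace ℝ (Fin n))
    (φ : EuclideanSpace ℝ (Fin n) → ℝ) (M L_f α τ : ℝ)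
    (hf : ∀ x, HasGradientAt f (f' x) x)
    (hfconv : ConvexOn ℝ Set.univ f)
    (hlip : ∀ u v, ‖f' u - f' v‖ ≤ L_f * ‖u - v‖)
    (hφ : ConvexOn ℝ Set.univ (fun x => φ x + M / 2 * ‖x‖ ^ 2))
    (hα : α ∈ Set.Ioo (0 : ℝ) 1) (hτ : 0 < τ)
    (F : EuclideanSpace ℝ (Fin n) → ℝ) (hF : ∀ x, F x = f x + φ x)
    (xk yk qk1 xk1 yk1 : EuclideanSpace ℝ (Fin n))
    (hq : qk1 = (1 - α) • yk + α • xk)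
    (hx : ∀ u,
      φ xk1 + 1 / (2 * τ) * ‖xk1 - (xk - τ • f' qk1)‖ ^ 2 ≤
        φ u + 1 / (2 * τ) * ‖u - (xk - τ • f' qk1)‖ ^ 2)
    (hy : yk1 = (1 - α) • yk + α • xk1) :
    ∀ y : EuclideanSpace ℝ (Fin n),
      (1 / α - 1) * (F yk - F y) + 1 / (2 * τ) * ‖y - xk‖ ^ 2 ≥
        (1 / α) * (F yk1 - F y)
        + (1 / (2 * τ) - α * L_f / 2) * ‖xk1 - xk‖ ^ 2
        + (1 / (2 * τ) - M / 2) * ‖xk1 - y‖ ^ 2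
        - M / 2 * (1 - α) * ‖yk - xk1‖ ^ 2 := by
  intro y
  obtain ⟨hα0, hα1⟩ := hα
  have hτne : τ ≠ 0 := ne_of_gt hτ
  have h1α : (0 : ℝ) ≤ 1 - α := by linarith
  have hdesc := descent_lemma hf hlip qk1 yk1
  have hcy := grad_ineq hf hfconv qk1 y
  have hcyk := grad_ineq hf hfconv qk1 yk
  set g := f' qk1 with hg
  set z := xk - τ • g with hz
  -- three-point prox inequality
  have hprox : ∀ u : EuclideanSpace ℝ (Fin n),
      φ xk1 + 1 / (2 * τ) * ‖xk1 - z‖ ^ 2 + (1 / (2 * τ) - M / 2) * ‖u - xk1‖ ^ 2 ≤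
        φ u + 1 / (2 * τ) * ‖u - z‖ ^ 2 := by
    intro u
    have key : ∀ t : ℝ, 0 < t → t ≤ 1 →
        φ xk1 + 1 / (2 * τ) * ‖xk1 - z‖ ^ 2
          + (1 - t) * ((1 / (2 * τ) - M / 2) * ‖u - xk1‖ ^ 2) ≤
          φ u + 1 / (2 * τ) * ‖u - z‖ ^ 2 := by
      intro t ht0 ht1
      set ut := (1 - t) • xk1 + t • u with hut
      have hmin := hx ut
      have hcv := hφ.2 (Set.mem_univ xk1) (Set.mem_univ u)
        (by linarith : (0:ℝ) ≤ 1 - t) (le_of_lt ht0) (by ring)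
      simp only [smul_eq_mul] at hcv
      have e1 : ‖ut - z‖ ^ 2 =
          (1 - t) * ‖xk1 - z‖ ^ 2 + t * ‖u - z‖ ^ 2 - t * (1 - t) * ‖xk1 - u‖ ^ 2 := by
        rw [show ut - z = (1 - t) • (xk1 - z) + t • (u - z) from by rw [hut]; module,
          comb_norm_sq, show xk1 - z - (u - z) = xk1 - u from by module]
      have e2 : ‖ut‖ ^ 2 =
          (1 - t) * ‖xk1‖ ^ 2 + t * ‖u‖ ^ 2 - t * (1 - t) * ‖xk1 - u‖ ^ 2 := by
        rw [hut, comb_norm_sq]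
      have hφut : φ ut ≤ (1 - t) * φ xk1 + t * φ u + M / 2 * (t * (1 - t) * ‖xk1 - u‖ ^ 2) := by
        calc φ ut = (φ ut + M / 2 * ‖ut‖ ^ 2) - M / 2 * ‖ut‖ ^ 2 := by ring
          _ ≤ ((1 - t) * (φ xk1 + M / 2 * ‖xk1‖ ^ 2) + t * (φ u + M / 2 * ‖u‖ ^ 2))
              - M / 2 * ‖ut‖ ^ 2 := by linarith
          _ = (1 - t) * φ xk1 + t * φ u + M / 2 * (t * (1 - t) * ‖xk1 - u‖ ^ 2) := by
              rw [e2]; ring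
      have h10 : φ xk1 + 1 / (2 * τ) * ‖xk1 - z‖ ^ 2 ≤
          (1 - t) * (φ xk1 + 1 / (2 * τ) * ‖xk1 - z‖ ^ 2)
          + t * (φ u + 1 / (2 * τ) * ‖u - z‖ ^ 2)
          - (1 / (2 * τ) - M / 2) * (t * (1 - t) * ‖xk1 - u‖ ^ 2) := by
        calc φ xk1 + 1 / (2 * τ) * ‖xk1 - z‖ ^ 2
            ≤ φ ut + 1 / (2 * τ) * ‖ut - z‖ ^ 2 := hmin
          _ = φ ut + 1 / (2 * τ) * ((1 - t) * ‖xk1 - z‖ ^ 2 + t * ‖u - z‖ ^ 2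
              - t * (1 - t) * ‖xk1 - u‖ ^ 2) := by rw [e1]
          _ ≤ ((1 - t) * φ xk1 + t * φ u + M / 2 * (t * (1 - t) * ‖xk1 - u‖ ^ 2))
              + 1 / (2 * τ) * ((1 - t) * ‖xk1 - z‖ ^ 2 + t * ‖u - z‖ ^ 2
              - t * (1 - t) * ‖xk1 - u‖ ^ 2) := by linarith
          _ = _ := by ring
      have hWs : ‖u - xk1‖ = ‖xk1 - u‖ := norm_sub_rev _ _
      have h11 : t * (φ xk1 + 1 / (2 * τ) * ‖xk1 - z‖ ^ 2
          + (1 - t) * ((1 / (2 * τ) - M / 2) * ‖u - xk1‖ ^ 2)) ≤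
          t * (φ u + 1 / (2 * τ) * ‖u - z‖ ^ 2) := by
        rw [hWs]; nlinarith [h10]
      exact le_of_mul_le_mul_left h11 ht0
    by_cases hA : (1 / (2 * τ) - M / 2) * ‖u - xk1‖ ^ 2 ≤ 0
    · have h12 := key 1 one_pos le_rfl
      linarith
    · push_neg at hA
      by_contra hcon
      push_neg at hcon
      set A := (1 / (2 * τ) - M / 2) * ‖u - xk1‖ ^ 2 with hAdef
      set ε := (φ xk1 + 1 / (2 * τ) * ‖xk1 - z‖ ^ 2 + A)
        - (φ u + 1 / (2 * τ) * ‖u - z‖ ^ 2) with hεdef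
      have hε : 0 < ε := by simp only [hεdef]; linarith
      have ht0 : 0 < min 1 (ε / (2 * A)) :=
        lt_min one_pos (div_pos hε (by linarith))
      have ht1 : min 1 (ε / (2 * A)) ≤ 1 := min_le_left _ _
      have h13 := key _ ht0 ht1
      have h14 : min 1 (ε / (2 * A)) * A ≤ ε / 2 := by
        calc min 1 (ε / (2 * A)) * A ≤ (ε / (2 * A)) * A :=
              mul_le_mul_of_nonneg_right (min_le_right _ _) (le_of_lt hA)
          _ = ε / 2 := by field_simp
      nlinarith [h13, h14, hε]
  -- expansions
  have hnq : ‖yk1 - qk1‖ ^ 2 = α ^ 2 * ‖xk1 - xk‖ ^ 2 := by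
    rw [show yk1 - qk1 = α • (xk1 - xk) from by rw [hy, hq]; module, norm_smul,
      Real.norm_eq_abs, abs_of_pos hα0, mul_pow]
  have hiq : ⟪g, yk1 - qk1⟫ = (1 - α) * ⟪g, yk - qk1⟫ + α * ⟪g, xk1 - qk1⟫ := by
    rw [show yk1 - qk1 = (1 - α) • (yk - qk1) + α • (xk1 - qk1) from by rw [hy, hq]; module,
      inner_add_right, real_inner_smul_right, real_inner_smul_right]
  have hix : ⟪g, xk1 - qk1⟫ = ⟪g, y - qk1⟫ + ⟪g, xk1 - xk⟫ - ⟪g, y - xk⟫ := by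
    rw [show xk1 - qk1 = (y - qk1) + (xk1 - xk) - (y - xk) from by module,
      inner_sub_right, inner_add_right]
  rw [hnq, hiq, hix] at hdesc
  have hproxy := hprox y
  have ey : ‖y - z‖ ^ 2 = ‖y - xk‖ ^ 2 + 2 * τ * ⟪g, y - xk⟫ + τ ^ 2 * ‖g‖ ^ 2 := by
    rw [show y - z = (y - xk) + τ • g from by rw [hz]; module, norm_add_sq_real,
      real_inner_smul_right, norm_smul, Real.norm_eq_abs, abs_of_pos hτ, mul_pow,
      real_inner_comm (y - xk) g]
    ring
  have ex : ‖xk1 - z‖ ^ 2 = ‖xk1 - xk‖ ^ 2 + 2 * τ * ⟪g, xk1 - xk⟫ + τ ^ 2 * ‖g‖ ^ 2 := by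
    rw [show xk1 - z = (xk1 - xk) + τ • g from by rw [hz]; module, norm_add_sq_real,
      real_inner_smul_right, norm_smul, Real.norm_eq_abs, abs_of_pos hτ, mul_pow,
      real_inner_comm (xk1 - xk) g]
    ring
  rw [ey, ex] at hproxy
  have es1 : 1 / (2 * τ) * (‖y - xk‖ ^ 2 + 2 * τ * ⟪g, y - xk⟫ + τ ^ 2 * ‖g‖ ^ 2)
      = 1 / (2 * τ) * ‖y - xk‖ ^ 2 + ⟪g, y - xk⟫ + τ / 2 * ‖g‖ ^ 2 := by
    field_simp
  have es2 : 1 / (2 * τ) * (‖xk1 - xk‖ ^ 2 + 2 * τ * ⟪g, xk1 - xk⟫ + τ ^ 2 * ‖g‖ ^ 2)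
      = 1 / (2 * τ) * ‖xk1 - xk‖ ^ 2 + ⟪g, xk1 - xk⟫ + τ / 2 * ‖g‖ ^ 2 := by
    field_simp
  rw [es1, es2] at hproxy
  -- weak convexity at yk1
  have hwc := hφ.2 (Set.mem_univ yk) (Set.mem_univ xk1) h1α (le_of_lt hα0) (by ring)
  simp only [smul_eq_mul] at hwc
  have e3 := comb_norm_sq yk xk1 α
  have hφy1 : φ yk1 ≤ (1 - α) * φ yk + α * φ xk1
      + M / 2 * (α * (1 - α) * ‖yk - xk1‖ ^ 2) := by
    rw [hy]
    calc φ ((1 - α) • yk + α • xk1)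
        = (φ ((1 - α) • yk + α • xk1) + M / 2 * ‖(1 - α) • yk + α • xk1‖ ^ 2)
          - M / 2 * ‖(1 - α) • yk + α • xk1‖ ^ 2 := by ring
      _ ≤ ((1 - α) * (φ yk + M / 2 * ‖yk‖ ^ 2) + α * (φ xk1 + M / 2 * ‖xk1‖ ^ 2))
          - M / 2 * ‖(1 - α) • yk + α • xk1‖ ^ 2 := by linarith
      _ = (1 - α) * φ yk + α * φ xk1 + M / 2 * (α * (1 - α) * ‖yk - xk1‖ ^ 2) := by
          rw [e3]; ring
  -- multiplied versions
  have hcyk' := mul_le_mul_of_nonneg_left hcyk h1α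
  have hcy' := mul_le_mul_of_nonneg_left hcy (le_of_lt hα0)
  have hproxy' := mul_le_mul_of_nonneg_left hproxy (le_of_lt hα0)
  have hsym : ‖xk1 - y‖ = ‖y - xk1‖ := norm_sub_rev _ _
  rw [ge_iff_le, ← sub_nonneg, hsym]
  have hcore : 0 ≤ α * ((1 / α - 1) * (F yk - F y) + 1 / (2 * τ) * ‖y - xk‖ ^ 2
      - ((1 / α) * (F yk1 - F y) + (1 / (2 * τ) - α * L_f / 2) * ‖xk1 - xk‖ ^ 2
        + (1 / (2 * τ) - M / 2) * ‖y - xk1‖ ^ 2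
        - M / 2 * (1 - α) * ‖yk - xk1‖ ^ 2)) := by
    have hexp : α * ((1 / α - 1) * (F yk - F y) + 1 / (2 * τ) * ‖y - xk‖ ^ 2
        - ((1 / α) * (F yk1 - F y) + (1 / (2 * τ) - α * L_f / 2) * ‖xk1 - xk‖ ^ 2
          + (1 / (2 * τ) - M / 2) * ‖y - xk1‖ ^ 2
          - M / 2 * (1 - α) * ‖yk - xk1‖ ^ 2)) =
        (1 - α) * (F yk - F y) + α * (1 / (2 * τ)) * ‖y - xk‖ ^ 2
        - ((F yk1 - F y) + α * ((1 / (2 * τ) - α * L_f / 2)) * ‖xk1 - xk‖ ^ 2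
          + α * ((1 / (2 * τ) - M / 2)) * ‖y - xk1‖ ^ 2
          - α * (M / 2 * (1 - α)) * ‖yk - xk1‖ ^ 2) := by
      field_simp
    rw [hexp, hF yk, hF y, hF yk1]
    nlinarith [hdesc, hcyk', hcy', hproxy', hφy1]
  have h0 : α * 0 ≤ α * ((1 / α - 1) * (F yk - F y) + 1 / (2 * τ) * ‖y - xk‖ ^ 2
      - ((1 / α) * (F yk1 - F y) + (1 / (2 * τ) - α * L_f / 2) * ‖xk1 - xk‖ ^ 2
        + (1 / (2 * τ) - M / 2) * ‖y - xk1‖ ^ 2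
        - M / 2 * (1 - α) * ‖yk - xk1‖ ^ 2)) := by
    rw [mul_zero]; exact hcore
  exact le_of_mul_le_mul_left h0 hα0
end

section
/- Convergence of ProxPnP-αPGD: let f : ℝⁿ → ℝ be convex, differentiable with ∇f L_f-Lipschitz, and bounded below; let λ > 0; let 0 ≤ M < 1 and let φ : ℝⁿ → ℝ be M-weakly convex and bounded below; assume λ·L_f·M < 1 and let α satisfy M < α < 1/(λL_f) with α < 1. Set F = λf + φ with lower bound F*. Let (q_k), (x_k), (y_k) satisfy, for all k ≥ 0: q_{k+1} = (1−α)y_k + α·x_k; x_{k+1} a minimizer over ℝⁿ of u ↦ φ(u) + (1/2)‖u − (x_k − λ·∇f(q_{k+1}))‖²; y_{k+1} = (1−α)y_k + α·x_{k+1}. Then with δ = (α/2)(1 − 1/α)²: (i) the sequence E_k = F(y_k) + δ‖y_k − y_{k−1}‖² is non-increasing and converges; (ii) Σ_{k=1}^∞ ‖y_{k+1} − y_k‖² < ∞ and min_{1 ≤ k ≤ K} ‖y_{k+1} − y_k‖² ≤ (E_1 − F*)/((γ − δ)·K) for all K ≥ 1, where γ = (1/α)(1/2 − M(2−α)/2).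 -/
open RealInnerProductSpace

section AuxPnP
variable {E : Type*} [NormedAddCommGroup E] [InnerProductSpace ℝ E] [CompleteSpace E]

set_option linter.unusedSectionVars false

lemma aux_normsm_sq (c : ℝ) (v : E) : ‖c • v‖ ^ 2 = c ^ 2 * ‖v‖ ^ 2 := by
  rw [norm_smul, Real.norm_eq_abs, mul_pow, sq_abs]

lemma norm_combo_sq (s t : ℝ) (hst : s + t = 1) (a b : E) :
    ‖s • a + t • b‖ ^ 2 = s * ‖a‖ ^ 2 + t * ‖b‖ ^ 2 - s * t * ‖a - b‖ ^ 2 := by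
  have h1 : ‖s • a + t • b‖ ^ 2 = s^2*‖a‖^2 + 2*(s*t)*⟪a,b⟫ + t^2*‖b‖^2 := by
    rw [norm_add_sq_real, norm_smul, norm_smul, real_inner_smul_left, real_inner_smul_right]
    simp [Real.norm_eq_abs, mul_pow, sq_abs]
    ring
  have h2 : ‖a - b‖ ^ 2 = ‖a‖^2 - 2*⟪a,b⟫ + ‖b‖^2 := norm_sub_sq_real a b
  linear_combination h1 + s*t*h2 + (s*‖a‖^2 + t*‖b‖^2)*hst

lemma expand_prox (p x g : E) (lam : ℝ) :
    ‖p - (x - lam • g)‖ ^ 2 = ‖p - x‖ ^ 2 + 2 * lam * ⟪g, p - x⟫ + lam ^ 2 * ‖g‖ ^ 2 := by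
  have : p - (x - lam • g) = (p - x) + lam • g := by abel
  rw [this, norm_add_sq_real, norm_smul, real_inner_smul_right, real_inner_comm]
  simp [Real.norm_eq_abs, mul_pow, sq_abs]
  ring

lemma line_hasDerivAt (f : E → ℝ) (f' : E → E) (hf : ∀ x, HasGradientAt f (f' x) x)
    (a v : E) (t : ℝ) :
    HasDerivAt (fun s : ℝ => f (a + s • v)) ⟪f' (a + t • v), v⟫ t := by
  have hc : HasDerivAt (fun s : ℝ => a + s • v) v t := by
    simpa using ((hasDerivAt_id t).smul_const v).const_add a
  have := ((hf (a + t • v)).hasFDerivAt).comp_hasDerivAt t hc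
  simpa [InnerProductSpace.toDual_apply_apply, Function.comp_def] using this

lemma grad_convex_ineq (f : E → ℝ) (f' : E → E) (hf : ∀ x, HasGradientAt f (f' x) x)
    (hconv : ConvexOn ℝ Set.univ f) (a b : E) :
    f a + ⟪f' a, b - a⟫ ≤ f b := by
  set v := b - a with hv
  set g : ℝ → ℝ := fun s => f (a + s • v) with hg
  have hd0 : HasDerivAt g ⟪f' a, v⟫ 0 := by
    simpa using line_hasDerivAt f f' hf a v 0
  have hslope : Filter.Tendsto (slope g 0) (nhdsWithin 0 {(0:ℝ)}ᶜ) (nhds ⟪f' a, v⟫) :=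
    hasDerivAt_iff_tendsto_slope.mp hd0
  have hslope' : Filter.Tendsto (slope g 0) (nhdsWithin 0 (Set.Ioi 0)) (nhds ⟪f' a, v⟫) :=
    hslope.mono_left (nhdsWithin_mono _ (fun x hx => ne_of_gt hx))
  have hbound : ∀ᶠ t in nhdsWithin (0:ℝ) (Set.Ioi 0), slope g 0 t ≤ g 1 - g 0 := by
    filter_upwards [Ioo_mem_nhdsGT_of_mem (Set.mem_Ico.mpr ⟨le_refl (0:ℝ), one_pos⟩)]
      with t ht
    obtain ⟨ht0, ht1⟩ := ht
    have h0 : g 0 = f a := by simp [hg]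
    have h1 : g 1 = f b := by simp [hg, hv]
    have hcomb : g t ≤ (1 - t) * g 0 + t * g 1 := by
      have h := hconv.2 (Set.mem_univ a) (Set.mem_univ b)
        (by linarith : (0:ℝ) ≤ 1 - t) (le_of_lt ht0) (by ring)
      have he : (1 - t) • a + t • b = a + t • v := by
        simp [hv, smul_sub, sub_smul]; abel
      rw [h0, h1]
      show f (a + t • v) ≤ _
      rw [← he]
      simpa [smul_eq_mul] using h
    have hsl : slope g 0 t = (g t - g 0) / t := by
      rw [slope_def_field]; ring_nf
    rw [hsl, div_le_iff₀ ht0]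
    nlinarith [hcomb]
  have := le_of_tendsto hslope' hbound
  have h0 : g 0 = f a := by simp [hg]
  have h1 : g 1 = f b := by simp [hg, hv]
  rw [h0, h1] at this
  linarith

lemma grad_descent_ineq (f : E → ℝ) (f' : E → E) (L : ℝ)
    (hf : ∀ x, HasGradientAt f (f' x) x)
    (hlip : ∀ u v, ‖f' u - f' v‖ ≤ L * ‖u - v‖) (a b : E) :
    f b ≤ f a + ⟪f' a, b - a⟫ + L / 2 * ‖b - a‖ ^ 2 := by
  set v := b - a with hv
  set g : ℝ → ℝ := fun s => f (a + s • v) with hg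
  have hcontf' : Continuous f' := by
    apply (LipschitzWith.of_dist_le_mul (K := Real.toNNReal L) ?_).continuous
    intro u w
    calc dist (f' u) (f' w) = ‖f' u - f' w‖ := by rw [dist_eq_norm]
    _ ≤ L * ‖u - w‖ := hlip u w
    _ ≤ Real.toNNReal L * dist u w := by
        rw [dist_eq_norm]
        exact mul_le_mul_of_nonneg_right (Real.le_coe_toNNReal L) (norm_nonneg _)
  have hcont : Continuous fun t : ℝ => ⟪f' (a + t • v), v⟫ := by
    exact (Continuous.inner (hcontf'.comp (by continuity)) continuous_const)
  have hint : g 1 - g 0 = ∫ t in (0:ℝ)..1, ⟪f' (a + t • v), v⟫ := by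
    rw [intervalIntegral.integral_eq_sub_of_hasDerivAt
      (fun t _ => line_hasDerivAt f f' hf a v t) (hcont.intervalIntegrable 0 1)]
  have hmono : (∫ t in (0:ℝ)..1, ⟪f' (a + t • v), v⟫) ≤
      ∫ t in (0:ℝ)..1, (⟪f' a, v⟫ + L * ‖v‖ ^ 2 * t) := by
    apply intervalIntegral.integral_mono_on (by norm_num)
      (hcont.intervalIntegrable 0 1)
      ((continuous_const.add (continuous_const.mul continuous_id)).intervalIntegrable 0 1)
    intro t ht
    obtain ⟨ht0, ht1⟩ := ht
    have h1 : ⟪f' (a + t • v), v⟫ - ⟪f' a, v⟫ = ⟪f' (a + t • v) - f' a, v⟫ := by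
      rw [inner_sub_left]
    have h2 : ⟪f' (a + t • v) - f' a, v⟫ ≤ ‖f' (a + t • v) - f' a‖ * ‖v‖ :=
      real_inner_le_norm _ _
    have h3 : ‖f' (a + t • v) - f' a‖ ≤ L * (t * ‖v‖) := by
      have := hlip (a + t • v) a
      simpa [norm_smul, abs_of_nonneg ht0, mul_assoc] using this
    simp only [Pi.add_apply, Pi.mul_apply, id_eq]
    nlinarith [norm_nonneg v]
  have hcalc : (∫ t in (0:ℝ)..1, (⟪f' a, v⟫ + L * ‖v‖ ^ 2 * t)) =
      ⟪f' a, v⟫ + L / 2 * ‖v‖ ^ 2 := by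
    rw [intervalIntegral.integral_add intervalIntegrable_const
      (intervalIntegral.intervalIntegrable_id.const_mul _),
      intervalIntegral.integral_const, intervalIntegral.integral_const_mul,
      integral_id]
    norm_num; ring
  have h0 : g 0 = f a := by simp [hg]
  have h1 : g 1 = f b := by simp [hg, hv]
  rw [h0, h1] at hint
  linarith [hint, hmono, hcalc.le, hcalc.ge]

lemma strong_prox (φ : E → ℝ) (M : ℝ)
    (hφ : ConvexOn ℝ Set.univ (fun x => φ x + M / 2 * ‖x‖ ^ 2)) (z p : E)
    (hp : ∀ u, φ p + 1/2*‖p - z‖^2 ≤ φ u + 1/2*‖u - z‖^2) (u : E) :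
    φ p + 1/2*‖p - z‖^2 + (1 - M)/2 * ‖u - p‖^2 ≤ φ u + 1/2*‖u - z‖^2 := by
  set ψ : E → ℝ := fun w => φ w + 1/2*‖w - z‖^2 with hψ
  set D : ℝ := ‖u - p‖^2 with hD
  have key : ∀ t : ℝ, t ∈ Set.Ioo (0:ℝ) 1 → ψ p + (1 - M)/2 * (1 - t) * D ≤ ψ u := by
    intro t ht
    obtain ⟨ht0, ht1⟩ := ht
    set w : E := (1 - t) • p + t • u with hw
    have hconv := hφ.2 (Set.mem_univ p) (Set.mem_univ u)
      (by linarith : (0:ℝ) ≤ 1 - t) (le_of_lt ht0) (by ring)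
    simp only [smul_eq_mul] at hconv
    rw [show (1 - t) • p + t • u = w from rfl] at hconv
    have hn1 : ‖w‖^2 = (1-t)*‖p‖^2 + t*‖u‖^2 - (1-t)*t*‖p - u‖^2 :=
      norm_combo_sq (1-t) t (by ring) p u
    have hwz : w - z = (1 - t) • (p - z) + t • (u - z) := by
      rw [hw]; module
    have hn2 : ‖w - z‖^2 = (1-t)*‖p - z‖^2 + t*‖u - z‖^2 - (1-t)*t*‖p - u‖^2 := by
      rw [hwz]
      have := norm_combo_sq (1-t) t (by ring) (p - z) (u - z)
      rwa [show p - z - (u - z) = p - u by abel] at this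
    have hψw : ψ w ≤ (1-t)*ψ p + t*ψ u - (1-M)/2*(1-t)*t*‖p - u‖^2 := by
      simp only [hψ]
      rw [hn2]
      rw [hn1] at hconv
      nlinarith [hconv]
    have hmin := hp w
    have hDpu : ‖p - u‖^2 = D := by rw [hD, ← norm_neg (u - p)]; congr 1; abel
    rw [hDpu] at hψw
    have : ψ p ≤ (1-t)*ψ p + t*ψ u - (1-M)/2*(1-t)*t*D := le_trans hmin hψw
    have ht0' : 0 < t := ht0
    nlinarith [this]
  have hten : Filter.Tendsto (fun t : ℝ => ψ p + (1 - M)/2 * (1 - t) * D)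
      (nhdsWithin 0 (Set.Ioi 0)) (nhds (ψ p + (1 - M)/2 * D)) := by
    have : Continuous fun t : ℝ => ψ p + (1 - M)/2 * (1 - t) * D := by continuity
    have h := this.tendsto 0
    simp only [sub_zero, mul_one] at h
    exact h.mono_left nhdsWithin_le_nhds
  have hev : ∀ᶠ t in nhdsWithin (0:ℝ) (Set.Ioi 0),
      ψ p + (1 - M)/2 * (1 - t) * D ≤ ψ u := by
    filter_upwards [Ioo_mem_nhdsGT_of_mem (Set.mem_Ico.mpr ⟨le_refl (0:ℝ), one_pos⟩)]
      with t ht using key t ht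
  have := le_of_tendsto hten hev
  simpa [hψ] using this


end AuxPnP

set_option maxHeartbeats 2000000 in
/-- Convergence of ProxPnP-αPGD: with `f` convex, differentiable, `∇f`
`L_f`-Lipschitz, bounded below; `λ > 0`; `0 ≤ M < 1`, `φ` `M`-weakly convex, bounded
below; `λ·L_f·M < 1`, `M < α < 1/(λL_f)` (the latter stated as `α·(λ·L_f) < 1`), `α < 1`;
`F = λf + φ` with lower bound `F*`; and ProxPnP-αPGD iterates (stepsize `τ = 1`):
with `δ = (α/2)(1 − 1/α)²` and `γ = (1/α)(1/2 − M(2−α)/2)`: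
(i) `E_k = F(y_k) + δ‖y_k − y_{k−1}‖²` (for `k ≥ 1`) is non-increasing and converges;
(ii) `Σ_{k≥1} ‖y_{k+1} − y_k‖² < ∞` and
`min_{1 ≤ k ≤ K} ‖y_{k+1} − y_k‖² ≤ (E_1 − F*)/((γ − δ)·K)` for all `K ≥ 1`. -/
theorem proxPnP_alphaPGD_convergence {n : ℕ}
    (f : EuclideanSpace ℝ (Fin n) → ℝ)
    (f' : EuclideanSpace ℝ (Fin n) → EuclideanSpace ℝ (Fin n))
    (φ : EuclideanSpace ℝ (Fin n) → ℝ) (M L_f lam α Fstar : ℝ)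
    (hf : ∀ x, HasGradientAt f (f' x) x)
    (hfconv : ConvexOn ℝ Set.univ f)
    (hlip : ∀ u v, ‖f' u - f' v‖ ≤ L_f * ‖u - v‖)
    (hfbd : ∃ c, ∀ x, c ≤ f x)
    (hlam : 0 < lam)
    (hM0 : 0 ≤ M) (hM1 : M < 1)
    (hφ : ConvexOn ℝ Set.univ (fun x => φ x + M / 2 * ‖x‖ ^ 2))
    (hφbd : ∃ c, ∀ x, c ≤ φ x)
    (hcond : lam * L_f * M < 1)
    (hαM : M < α) (hαlam : α * (lam * L_f) < 1) (hα1 : α < 1)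
    (F : EuclideanSpace ℝ (Fin n) → ℝ) (hF : ∀ x, F x = lam * f x + φ x)
    (hFstar : ∀ x, Fstar ≤ F x)
    (q x y : ℕ → EuclideanSpace ℝ (Fin n))
    (hq : ∀ k, q (k + 1) = (1 - α) • y k + α • x k)
    (hx : ∀ k, ∀ u,
      φ (x (k + 1)) + 1 / 2 * ‖x (k + 1) - (x k - lam • f' (q (k + 1)))‖ ^ 2 ≤
        φ u + 1 / 2 * ‖u - (x k - lam • f' (q (k + 1)))‖ ^ 2)
    (hy : ∀ k, y (k + 1) = (1 - α) • y k + α • x (k + 1))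
    (δ γ : ℝ)
    (hδ : δ = α / 2 * (1 - 1 / α) ^ 2)
    (hγ : γ = 1 / α * (1 / 2 - M * (2 - α) / 2))
    (E : ℕ → ℝ)
    (hE : ∀ k, E k = F (y (k + 1)) + δ * ‖y (k + 1) - y k‖ ^ 2) :
    ((∀ k, E (k + 1) ≤ E k) ∧ ∃ l : ℝ, Filter.Tendsto E Filter.atTop (nhds l)) ∧
    Summable (fun k : ℕ => ‖y (k + 2) - y (k + 1)‖ ^ 2) ∧
    (∀ K : ℕ, 1 ≤ K → ∃ k : ℕ, 1 ≤ k ∧ k ≤ K ∧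
      ‖y (k + 1) - y k‖ ^ 2 ≤ (E 0 - Fstar) / ((γ - δ) * K)) := by
  have step : ∀ k : ℕ, E (k + 1) + (γ - δ) * ‖y (k + 2) - y (k + 1)‖ ^ 2 ≤ E k := by
    intro k
    have hα0 : (0:ℝ) < α := lt_of_le_of_lt hM0 hαM
    have hαne : α ≠ 0 := ne_of_gt hα0
    set ya := y k with hya
    set yb := y (k + 1) with hyb
    set yc := y (k + 2) with hyc
    set X := x (k + 1) with hX
    set P := x (k + 2) with hP
    set Q := q (k + 2) with hQ
    set g := f' Q with hg
    have hB : yb = (1 - α) • ya + α • X := hy k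
    have hCc : yc = (1 - α) • yb + α • P := hy (k + 1)
    have hQQ : Q = (1 - α) • yb + α • X := hq (k + 1)
    have hprox : ∀ u, φ P + 1/2 * ‖P - (X - lam • g)‖^2 ≤ φ u + 1/2 * ‖u - (X - lam • g)‖^2 := by
      intro u
      have := hx (k + 1) u
      simpa using this
    clear_value ya yb yc X P Q g
    -- vector identities
    have i1 : yc - yb = α • (P - yb) := by rw [hCc]; module
    have i2 : yc - Q = α • (P - X) := by rw [hCc, hQQ]; module
    have i3 : yb - X = ((1 - α)/α) • (ya - yb) := by
      rw [hB]; match_scalars <;> field_simp <;> ring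
    -- scalar abbreviations
    set IP : ℝ := ⟪g, P - yb⟫ with hIP
    set IPX : ℝ := ⟪g, P - X⟫ with hIPX
    have eICB : ⟪g, yc - yb⟫ = α * IP := by rw [i1, real_inner_smul_right]
    have eIBX : ⟪g, yb - X⟫ = IPX - IP := by
      rw [hIPX, hIP, ← inner_sub_right]
      congr 1; abel
    have eNCQ : ‖yc - Q‖^2 = α^2 * ‖P - X‖^2 := by rw [i2, aux_normsm_sq]
    have eNBX : ‖yb - X‖^2 = (1-α)^2/α^2 * ‖yb - ya‖^2 := by
      rw [i3, aux_normsm_sq, norm_sub_rev ya yb, div_pow]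
    -- (A)
    have raw1 : f yc ≤ f Q + ⟪g, yc - Q⟫ + L_f/2 * ‖yc - Q‖^2 := by
      have h := grad_descent_ineq f f' L_f hf hlip Q yc; rwa [← hg] at h
    have raw2 : f Q + ⟪g, yb - Q⟫ ≤ f yb := by
      have h := grad_convex_ineq f f' hf hfconv Q yb; rwa [← hg] at h
    have eI : ⟪g, yc - Q⟫ = ⟪g, yb - Q⟫ + α * IP := by
      rw [← eICB, ← inner_add_right]
      congr 1; abel
    have hsum : f yc ≤ f yb + α * IP + L_f/2 * (α^2 * ‖P - X‖^2) := by
      rw [eI, eNCQ] at raw1; linarith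
    have hA : lam * f yc ≤ lam * (f yb + α * IP + L_f/2 * (α^2 * ‖P - X‖^2)) :=
      mul_le_mul_of_nonneg_left hsum hlam.le
    -- (B')
    have sp := strong_prox φ M hφ (X - lam • g) P hprox yb
    have e3 : ‖P - (X - lam • g)‖^2 = ‖P - X‖^2 + 2*lam*IPX + lam^2*‖g‖^2 :=
      expand_prox P X g lam
    have e4 : ‖yb - (X - lam • g)‖^2 = ‖yb - X‖^2 + 2*lam*(IPX - IP) + lam^2*‖g‖^2 := by
      rw [expand_prox yb X g lam, eIBX]
    have hB'' : φ P + 1/2 * ‖P - X‖^2 + lam*IPX + (1-M)/2 * ‖yb - P‖^2 ≤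
        φ yb + 1/2 * ((1-α)^2/α^2 * ‖yb - ya‖^2) + lam*(IPX - IP) := by
      rw [e3, e4, eNBX] at sp; linarith
    have hB'α := mul_le_mul_of_nonneg_left hB'' hα0.le
    -- (C)
    have cv := hφ.2 (Set.mem_univ yb) (Set.mem_univ P)
      (by linarith : (0:ℝ) ≤ 1 - α) hα0.le (by ring)
    simp only [smul_eq_mul] at cv
    have ncombo : ‖(1-α) • yb + α • P‖^2 =
        (1-α)*‖yb‖^2 + α*‖P‖^2 - (1-α)*α*‖yb - P‖^2 :=
      norm_combo_sq (1-α) α (by ring) yb P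
    rw [ncombo] at cv
    rw [← hCc] at cv
    have hC : φ yc ≤ (1-α)*φ yb + α*φ P + M/2*((1-α)*α*‖yb - P‖^2) := by
      linarith [cv]
    -- remaining scalar facts
    have hqN : lam * (L_f/2 * (α^2 * ‖P - X‖^2)) ≤ 1/2 * α * ‖P - X‖^2 := by
      have key : (0:ℝ) ≤ (1 - α*(lam*L_f)) * (α * ‖P - X‖^2) :=
        mul_nonneg (by linarith) (mul_nonneg hα0.le (pow_nonneg (norm_nonneg _) 2))
      linarith [key]
    have e1 : α * (1/2 * ((1-α)^2/α^2 * ‖yb - ya‖^2)) = δ * ‖yb - ya‖^2 := by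
      rw [hδ]; field_simp; ring
    have e2 : γ * (α^2 * ‖yb - P‖^2) = α/2 * ‖yb - P‖^2 - M*(2-α)*α/2 * ‖yb - P‖^2 := by
      rw [hγ]; field_simp
    have e7 : γ * ‖yc - yb‖^2 = γ * (α^2 * ‖yb - P‖^2) := by
      rw [i1, aux_normsm_sq, norm_sub_rev P yb]
    have e8 : δ * ‖yc - yb‖^2 = δ * (α^2 * ‖yb - P‖^2) := by
      rw [i1, aux_normsm_sq, norm_sub_rev P yb]
    -- conclude
    rw [hE (k+1), hE k, hF, hF, ← hya, ← hyb, ← hyc]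
    linarith [hA, hB'α, hC, hqN, e1, e2, e7, e8]
  have hγδpos : (0:ℝ) < γ - δ := by
    have hα0 : (0:ℝ) < α := lt_of_le_of_lt hM0 hαM
    have h : γ - δ = (2 - α) * (α - M) / (2 * α) := by
      rw [hγ, hδ]; field_simp; ring
    rw [h]
    exact div_pos (mul_pos (by linarith) (by linarith)) (by linarith)
  have hα0 : (0:ℝ) < α := lt_of_le_of_lt hM0 hαM
  have hδ0 : (0:ℝ) ≤ δ := by
    rw [hδ]; exact mul_nonneg (by linarith) (sq_nonneg _)
  have Elb : ∀ k, Fstar ≤ E k := by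
    intro k
    rw [hE k]
    have h1 := hFstar (y (k + 1))
    have h2 : (0:ℝ) ≤ δ * ‖y (k + 1) - y k‖ ^ 2 :=
      mul_nonneg hδ0 (pow_nonneg (norm_nonneg _) 2)
    linarith
  have mono : ∀ k, E (k + 1) ≤ E k := by
    intro k
    have h1 := step k
    have h2 : (0:ℝ) ≤ (γ - δ) * ‖y (k + 2) - y (k + 1)‖ ^ 2 :=
      mul_nonneg hγδpos.le (pow_nonneg (norm_nonneg _) 2)
    linarith
  have hsumle : ∀ N : ℕ, ∑ j ∈ Finset.range N, ‖y (j + 2) - y (j + 1)‖ ^ 2 ≤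
      (E 0 - Fstar) / (γ - δ) := by
    intro N
    have htel : ∑ j ∈ Finset.range N, (E j - E (j + 1)) = E 0 - E N :=
      Finset.sum_range_sub' E N
    have h1 : (γ - δ) * ∑ j ∈ Finset.range N, ‖y (j + 2) - y (j + 1)‖ ^ 2 ≤ E 0 - E N := by
      rw [Finset.mul_sum, ← htel]
      exact Finset.sum_le_sum (fun j _ => by linarith [step j])
    rw [le_div_iff₀ hγδpos]
    have h2 := Elb N
    nlinarith [h1]
  refine ⟨⟨mono, ?_⟩, ?_, ?_⟩
  · exact ⟨_, tendsto_atTop_ciInf (antitone_nat_of_succ_le mono)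
      ⟨Fstar, by rintro _ ⟨k, rfl⟩; exact Elb k⟩⟩
  · exact summable_of_sum_range_le (fun k => pow_nonneg (norm_nonneg _) 2) hsumle
  · intro K hK
    by_contra hcon
    push_neg at hcon
    set B : ℝ := (E 0 - Fstar) / ((γ - δ) * K) with hB
    have hlt : ∀ j ∈ Finset.range K, B < ‖y (j + 2) - y (j + 1)‖ ^ 2 := by
      intro j hj
      have hjK : j + 1 ≤ K := Finset.mem_range.mp hj
      have := hcon (j + 1) (by omega) hjK
      simpa using this
    have hne : (Finset.range K).Nonempty := ⟨0, Finset.mem_range.mpr (by omega)⟩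
    have hsum := Finset.sum_lt_sum_of_nonempty hne hlt
    rw [Finset.sum_const, Finset.card_range, nsmul_eq_mul] at hsum
    have hKne : (K:ℝ) ≠ 0 := Nat.cast_ne_zero.mpr (by omega)
    have heq : (K:ℝ) * B = (E 0 - Fstar) / (γ - δ) := by
      rw [hB]; field_simp
    have := hsumle K
    linarith
end
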